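/- arXiv:1010.2419 — 5 statements merged into one kernel-verified Lean document; each statement's English description precedes it below -/
import Mathlib

section
/- Let F be a field of characteristic different from 2, V an F-vector space with dim V > 1, and f : V × V → F a non-degenerate symmetric bilinear form. Let J(V,f) be the Jordan algebra of the bilinear form f. Then every 1/2-derivation φ of J(V,f) is of the form φ(x) = α·x for some α ∈ F. -/
/-- The multiplication of the Jordan algebra `J(V,f)` of a bilinear form
`f : V × V → F`, defined on `F ⊕ V` by
`(α + v)·(β + w) = (αβ + f(v,w)) + (αw + βv)`. -/
def jordanFormMul {F V : Type*} [Field F] [AddCommGroup V] [Module F V]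
    (f : V →ₗ[F] V →ₗ[F] F) (x y : F × V) : F × V :=
  (x.1 * y.1 + f x.2 y.2, x.1 • y.2 + y.1 • x.2)

/-- **1/2-derivations of the Jordan algebra of a bilinear form.**
Let `F` be a field of characteristic not `2`, `V` an `F`-vector space with
`dim V > 1` and `f` a non-degenerate symmetric bilinear form on `V`.
Then every `1/2`-derivation `φ` of `J(V,f)` is of the form `φ x = α • x`
for some `α ∈ F`. -/
theorem half_derivation_of_jordan_algebra_of_bilinear_form
    {F V : Type*} [Field F] [AddCommGroup V] [Module F V]
    (hchar : (2 : F) ≠ 0)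
    (hdim : 1 < Module.rank F V)
    (f : V →ₗ[F] V →ₗ[F] F)
    (hsymm : ∀ v w : V, f v w = f w v)
    (hnondeg : ∀ v : V, (∀ w : V, f v w = 0) → v = 0)
    (φ : (F × V) →ₗ[F] (F × V))
    (hφ : ∀ x y : F × V,
      φ (jordanFormMul f x y)
        = (1 / 2 : F) • (jordanFormMul f (φ x) y + jordanFormMul f x (φ y))) :
    ∃ α : F, ∀ x : F × V, φ x = α • x := by
  have hone : ∀ z : F × V, jordanFormMul f ((1 : F), (0 : V)) z = z := by
    intro z; simp [jordanFormMul]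
  set c : F × V := φ ((1 : F), (0 : V)) with hcdef
  -- φ is multiplication by c
  have hc : ∀ y : F × V, φ y = jordanFormMul f c y := by
    intro y
    have h := hφ ((1 : F), (0 : V)) y
    rw [hone, hone] at h
    have h2 : (2 : F) • φ y
        = (2 : F) • ((1 / 2 : F) • (jordanFormMul f c y + φ y)) := by
      rw [← h]
    rw [smul_smul] at h2
    have h21 : (2 : F) * (1 / 2) = 1 := by field_simp
    rw [h21, one_smul, two_smul] at h2
    exact add_right_cancel h2
  set u : V := c.2 with hudef
  -- key identity on the vector part
  have key : ∀ v w : V,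
      f v w • u = (1 / 2 : F) • ((f u v) • w + (f u w) • v) := by
    intro v w
    have h := hφ ((0 : F), v) ((0 : F), w)
    rw [hc, hc, hc] at h
    have h2 := congrArg Prod.snd h
    simpa [jordanFormMul, smul_smul, smul_add] using h2
  have huv : ∀ v : V, f u v • u = f u u • v := by
    intro v
    have h := key v u
    have h2 : (2 : F) • (f v u • u) = (f u v) • u + (f u u) • v := by
      rw [h, smul_smul, show (2 : F) * (1 / 2) = 1 by field_simp, one_smul]
    rw [two_smul, hsymm v u] at h2
    exact add_left_cancel h2
  have hu0 : u = 0 := by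
    by_contra hu
    by_cases hfu : f u u = 0
    · -- then f u v = 0 for all v, contradicting nondegeneracy
      apply hu
      apply hnondeg
      intro w
      have h := huv w
      rw [hfu, zero_smul] at h
      rcases smul_eq_zero.mp h with h' | h'
      · exact h'
      · exact absurd h' hu
    · -- then every vector is a multiple of u, so rank ≤ 1
      have hle : Module.rank F V ≤ 1 := by
        rw [rank_le_one_iff]
        refine ⟨u, fun v => ⟨f u v / f u u, ?_⟩⟩
        have h := huv v
        rw [div_eq_inv_mul, mul_smul, h, inv_smul_smul₀ hfu]
      exact absurd hdim (not_lt.mpr hle)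
  refine ⟨c.1, fun x => ?_⟩
  rw [hc]
  have : c.2 = 0 := hu0
  ext <;> simp [jordanFormMul, this, Prod.smul_def]
end

section
/- Let F be a field of characteristic different from 2 and n ≥ 3. Let H_n(F) be the Jordan algebra of symmetric n×n matrices over F, i.e. the subspace {X ∈ M_n(F) : Xᵀ = X} equipped with the product X∘Y = (1/2)(XY + YX). Then every 1/2-derivation φ of H_n(F) is of the form φ(X) = α·X for some α ∈ F. -/
open Matrix


/-- The Jordan (symmetrized) product `X ∘ Y = (1/2)(XY + YX)` on matrices. -/
def jordMul {F : Type*} [Field F] {n : ℕ}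
    (X Y : Matrix (Fin n) (Fin n) F) : Matrix (Fin n) (Fin n) F :=
  (1 / 2 : F) • (X * Y + Y * X)

/-- The subspace `H_n(F)` of symmetric `n × n` matrices over `F`. -/
def symmMatrices (F : Type*) [Field F] (n : ℕ) :
    Submodule F (Matrix (Fin n) (Fin n) F) where
  carrier := {X | X.transpose = X}
  add_mem' := by
    intro a b ha hb
    simp only [Set.mem_setOf_eq] at *
    rw [Matrix.transpose_add, ha, hb]
  zero_mem' := by simp
  smul_mem' := by
    intro c X hX
    simp only [Set.mem_setOf_eq] at *
    rw [Matrix.transpose_smul, hX]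

/-- **1/2-derivations of the Jordan algebra of symmetric matrices.**
Let `F` be a field of characteristic not `2` and `n ≥ 3`.  Every
`1/2`-derivation `φ` of the Jordan algebra `H_n(F)` of symmetric `n × n`
matrices (with product `X ∘ Y = (1/2)(XY + YX)`) is of the form
`φ X = α • X` for some `α ∈ F`.  (The `1/2`-derivation property is stated
via representatives: whenever `Z ∈ H_n(F)` equals `X ∘ Y` as a matrix,
`φ Z = (1/2) • (φ X ∘ Y + X ∘ φ Y)`.) -/
theorem half_derivation_of_symmetric_matrix_jordan_algebra
    {F : Type*} [Field F] (hchar : (2 : F) ≠ 0) (n : ℕ) (hn : 3 ≤ n)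
    (φ : symmMatrices F n →ₗ[F] symmMatrices F n)
    (hφ : ∀ X Y Z : symmMatrices F n,
      (Z : Matrix (Fin n) (Fin n) F)
          = jordMul (X : Matrix (Fin n) (Fin n) F) (Y : Matrix (Fin n) (Fin n) F) →
      (φ Z : Matrix (Fin n) (Fin n) F)
        = (1 / 2 : F) • (jordMul (φ X : Matrix (Fin n) (Fin n) F) (Y : Matrix (Fin n) (Fin n) F)
            + jordMul (X : Matrix (Fin n) (Fin n) F) (φ Y : Matrix (Fin n) (Fin n) F))) :
    ∃ α : F, ∀ X : symmMatrices F n, φ X = α • X := by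
  classical
  have jord_one : ∀ A : Matrix (Fin n) (Fin n) F, jordMul A 1 = A := by
    intro A
    rw [jordMul, mul_one, one_mul, ← two_smul F A, smul_smul, one_div,
      inv_mul_cancel₀ hchar, one_smul]
  have jord_self : ∀ A : Matrix (Fin n) (Fin n) F, jordMul A A = A * A := by
    intro A
    rw [jordMul, ← two_smul F (A * A), smul_smul, one_div, inv_mul_cancel₀ hchar, one_smul]
  have half_cancel : ∀ A B : Matrix (Fin n) (Fin n) F, (1 / 2 : F) • A = (1 / 2 : F) • B → A = B := by
    intro A B h
    have := congrArg (fun m : Matrix (Fin n) (Fin n) F => (2 : F) • m) h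
    simpa [smul_smul, mul_inv_cancel₀ hchar] using this
  have h1mem : (1 : Matrix (Fin n) (Fin n) F) ∈ symmMatrices F n := by
    show (1 : Matrix (Fin n) (Fin n) F)ᵀ = 1; simp
  set one : symmMatrices F n := ⟨1, h1mem⟩ with hone
  set c : Matrix (Fin n) (Fin n) F := (φ one : Matrix (Fin n) (Fin n) F) with hc
  -- Step 1: φ X = jordMul X c
  have step1 : ∀ X : symmMatrices F n, (φ X : Matrix (Fin n) (Fin n) F) = jordMul (X : Matrix (Fin n) (Fin n) F) c := by
    intro X
    have hXI : (X : Matrix (Fin n) (Fin n) F) = jordMul (X : Matrix (Fin n) (Fin n) F) (one : Matrix (Fin n) (Fin n) F) := by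
      rw [show ((one : symmMatrices F n) : Matrix (Fin n) (Fin n) F) = 1 from rfl, jord_one]
    have h := hφ X one X hXI
    rw [show ((one : symmMatrices F n) : Matrix (Fin n) (Fin n) F) = 1 from rfl, jord_one] at h
    have h2 : (φ X : Matrix (Fin n) (Fin n) F) + (φ X : Matrix (Fin n) (Fin n) F) = (φ X : Matrix (Fin n) (Fin n) F) + jordMul (X : Matrix (Fin n) (Fin n) F) c := by
      calc (φ X : Matrix (Fin n) (Fin n) F) + (φ X : Matrix (Fin n) (Fin n) F) = (2 : F) • (φ X : Matrix (Fin n) (Fin n) F) := (two_smul F _).symm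
        _ = (2 : F) • ((1 / 2 : F) • ((φ X : Matrix (Fin n) (Fin n) F) + jordMul (X : Matrix (Fin n) (Fin n) F) c)) := by rw [← h]
        _ = (φ X : Matrix (Fin n) (Fin n) F) + jordMul (X : Matrix (Fin n) (Fin n) F) c := by
            rw [smul_smul, mul_one_div_cancel hchar, one_smul]
    exact add_left_cancel h2
  -- Step 2: the key commutator relation
  have key : ∀ x : Matrix (Fin n) (Fin n) F, xᵀ = x → x * x * c + c * (x * x) = x * c * x + x * c * x := by
    intro x hx
    set X : symmMatrices F n := ⟨x, hx⟩ with hX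
    have hsq : (x * x) ∈ symmMatrices F n := by
      show (x * x)ᵀ = x * x
      rw [Matrix.transpose_mul, hx]
    set Z : symmMatrices F n := ⟨x * x, hsq⟩ with hZ
    have hZeq : (Z : Matrix (Fin n) (Fin n) F) = jordMul (X : Matrix (Fin n) (Fin n) F) (X : Matrix (Fin n) (Fin n) F) := by
      rw [show ((X : symmMatrices F n) : Matrix (Fin n) (Fin n) F) = x from rfl, jord_self]
    have h := hφ X X Z hZeq
    rw [step1 Z, step1 X] at h
    rw [show ((Z : symmMatrices F n) : Matrix (Fin n) (Fin n) F) = x * x from rfl,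
        show ((X : symmMatrices F n) : Matrix (Fin n) (Fin n) F) = x from rfl] at h
    -- h : jordMul (x*x) c = (1/2) • (jordMul (jordMul x c) x + jordMul x (jordMul x c))
    simp only [jordMul] at h
    simp only [Matrix.smul_mul, Matrix.mul_smul, smul_add, add_mul, mul_add,
      mul_assoc] at h
    rw [mul_assoc x x c, mul_assoc x c x]
    have h4 : (4 : F) ≠ 0 := by
      intro h0
      apply hchar
      have h22 : (4 : F) = 2 * 2 := by norm_num
      rcases mul_eq_zero.mp (h22 ▸ h0) with h' | h' <;> exact h'
    have h8 := congrArg (fun m : Matrix (Fin n) (Fin n) F => (8 : F) • m) h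
    simp only [smul_add, smul_smul] at h8
    norm_num at h8
    have e1 : (8 : F) * 2⁻¹ = 4 := by field_simp; norm_num
    have e2 : (8 : F) * (2⁻¹ * (2⁻¹ * 2⁻¹)) = 1 := by field_simp; norm_num
    rw [e1, e2] at h8
    simp only [one_smul] at h8
    have smul_cancel : ∀ (a : F), a ≠ 0 → ∀ A B : Matrix (Fin n) (Fin n) F, a • A = a • B → A = B := by
      intro a ha A B hab
      have := congrArg (fun m : Matrix (Fin n) (Fin n) F => a⁻¹ • m) hab
      simpa [smul_smul, inv_mul_cancel₀ ha] using this
    apply smul_cancel (4 : F) h4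
    linear_combination (norm := module) (2 : F) • h8
  have htr : ∀ (i j : Fin n) (a : F), (Matrix.single i j a)ᵀ = Matrix.single j i a := by
    intro i j a
    ext p q
    simp only [Matrix.transpose_apply, Matrix.single, Matrix.of_apply]
    exact if_congr and_comm rfl rfl
  -- off-diagonal entries of c vanish
  have hoff : ∀ i j : Fin n, i ≠ j → c i j = 0 := by
    intro i j hij
    have hk := key (Matrix.single i i 1) (htr i i 1)
    have hent := congrFun (congrFun hk i) j
    simp [hij, hij.symm] at hent
    exact hent
  -- diagonal entries of c are all equal
  have hdiag : ∀ i j : Fin n, i ≠ j → c i i = c j j := by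
    intro i j hij
    set x : Matrix (Fin n) (Fin n) F := Matrix.single i j 1 + Matrix.single j i 1 with hxdef
    have hx : xᵀ = x := by
      rw [hxdef, Matrix.transpose_add, htr, htr, add_comm]
    have hk := key x hx
    have hent := congrFun (congrFun hk i) i
    simp [hxdef, add_mul, mul_add, hij, hij.symm] at hent
    rw [← two_mul, ← two_mul] at hent
    exact mul_left_cancel₀ hchar hent
  -- conclude that c is a scalar matrix
  have hn0 : 0 < n := by omega
  set i0 : Fin n := ⟨0, hn0⟩ with hi0
  set α : F := c i0 i0 with hα
  have hcone : c = α • (1 : Matrix (Fin n) (Fin n) F) := by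
    ext i j
    rw [Matrix.smul_apply, Matrix.one_apply]
    by_cases hij : i = j
    · subst hij
      rw [if_pos rfl, smul_eq_mul, mul_one]
      by_cases hi : i = i0
      · rw [hi]
      · exact hdiag i i0 hi
    · rw [if_neg hij, smul_eq_mul, mul_zero]
      exact hoff i j hij
  refine ⟨α, fun X => ?_⟩
  apply Subtype.ext
  have hcoe : ((α • X : symmMatrices F n) : Matrix (Fin n) (Fin n) F)
      = α • (X : Matrix (Fin n) (Fin n) F) := rfl
  rw [hcoe, step1 X, hcone]
  calc jordMul (X : Matrix (Fin n) (Fin n) F) (α • 1)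
      = (1 / 2 : F) • (α • (X : Matrix (Fin n) (Fin n) F) + α • (X : Matrix (Fin n) (Fin n) F)) := by
        rw [jordMul, mul_smul_comm, smul_mul_assoc, mul_one, one_mul]
    _ = (1 / 2 : F) • ((2 : F) • (α • (X : Matrix (Fin n) (Fin n) F))) := by rw [two_smul]
    _ = α • (X : Matrix (Fin n) (Fin n) F) := by
        rw [smul_smul, one_div, inv_mul_cancel₀ hchar, one_smul]
end

section
/- Let F be a field of characteristic different from 2 and n ≥ 2. Let M_n(F)^(+) be the Jordan algebra of all n×n matrices over F equipped with the product X∘Y = (1/2)(XY + YX). Then every 1/2-derivation φ of M_n(F)^(+) is of the form φ(X) = α·X for some α ∈ F. -/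
/-- **1/2-derivations of `M_n(F)⁺`.**
Let `F` be a field of characteristic not `2` and `n ≥ 2`.  Every
`1/2`-derivation `φ` of the Jordan algebra `M_n(F)⁺` of all `n × n`
matrices with the product `X ∘ Y = (1/2)(XY + YX)` is of the form
`φ X = α • X` for some `α ∈ F`. -/
theorem half_derivation_of_full_matrix_jordan_algebra
    {F : Type*} [Field F] (hchar : (2 : F) ≠ 0) (n : ℕ) (hn : 2 ≤ n)
    (φ : Matrix (Fin n) (Fin n) F →ₗ[F] Matrix (Fin n) (Fin n) F)
    (hφ : ∀ X Y : Matrix (Fin n) (Fin n) F,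
      φ (jordMul X Y) = (1 / 2 : F) • (jordMul (φ X) Y + jordMul X (φ Y))) :
    ∃ α : F, ∀ X : Matrix (Fin n) (Fin n) F, φ X = α • X := by
  haveI : NeZero n := ⟨by omega⟩
  set C := φ 1 with hC
  -- Step 1: φ X = (1/2) • (X * C + C * X)
  have key : ∀ X, φ X = (1 / 2 : F) • (X * C + C * X) := by
    intro X
    have h := hφ X 1
    simp only [jordMul, mul_one, one_mul, map_smul, map_add, ← hC] at h
    ext i j
    have h' := congrFun (congrFun h i) j
    simp only [Matrix.smul_apply, Matrix.add_apply, smul_eq_mul] at h' ⊢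
    have h2 : (2 : F)⁻¹ ≠ 0 := inv_ne_zero hchar
    field_simp at h' ⊢
    apply mul_left_cancel₀ hchar
    linear_combination 2 * h'
  -- Step 2: quadratic identity X²C + CX² = 2 XCX
  have quad : ∀ X : Matrix (Fin n) (Fin n) F,
      X * X * C + C * (X * X) = X * C * X + X * C * X := by
    intro X
    have h := hφ X X
    rw [key (jordMul X X), key X] at h
    simp only [jordMul, smul_add, smul_smul, smul_mul_assoc, Matrix.mul_smul,
      add_mul, mul_add, mul_assoc] at h
    ext i j
    have h' := congrFun (congrFun h i) j
    simp only [Matrix.smul_apply, Matrix.add_apply, smul_eq_mul, mul_assoc] at h' ⊢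
    field_simp at h'
    have h8 : (8 : F) ≠ 0 := by
      have : (8 : F) = 2 * 2 * 2 := by norm_num
      rw [this]
      exact mul_ne_zero (mul_ne_zero hchar hchar) hchar
    apply mul_left_cancel₀ h8
    linear_combination 4 * h'
  -- off-diagonal entries of C vanish
  have offdiag : ∀ i j : Fin n, i ≠ j → C i j = 0 := by
    intro i j hij
    have h := quad (Matrix.single j i (1 : F))
    rw [Matrix.single_mul_single_of_ne (h := hij)] at h
    have h' := congrFun (congrFun h j) i
    simp only [Matrix.zero_mul, Matrix.mul_zero, zero_add, Matrix.add_apply,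
      Matrix.mul_single_apply_same,
      Matrix.single_mul_apply_same, one_mul, mul_one,
      Matrix.zero_apply] at h'
    have h2 : (2 : F) * C i j = 0 := by linear_combination -h'
    rcases mul_eq_zero.mp h2 with h3 | h3
    · exact absurd h3 hchar
    · exact h3
  -- diagonal entries of C are all equal
  have diag : ∀ i j : Fin n, i ≠ j → C i i = C j j := by
    intro i j hij
    set X := Matrix.single i i (1 : F) + Matrix.single i j (1 : F) with hX
    have hXX : X * X = X := by
      rw [hX, add_mul, mul_add, mul_add]
      rw [Matrix.single_mul_single_same, Matrix.single_mul_single_same,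
        Matrix.single_mul_single_of_ne (h := hij.symm),
        Matrix.single_mul_single_of_ne (h := hij.symm)]
      simp
    have h := quad X
    rw [hXX] at h
    have h' := congrFun (congrFun h i) j
    simp only [hX, add_mul, mul_add, Matrix.add_apply] at h'
    simp only [Matrix.mul_single_apply_of_ne (hbj := hij.symm),
      Matrix.single_mul_apply_same,
      Matrix.mul_single_apply_same, one_mul, mul_one] at h'
    rw [offdiag i j hij, offdiag j i hij.symm] at h'
    linear_combination -h'
  -- conclude
  set α := C 0 0 with hα
  have hCscalar : C = α • (1 : Matrix (Fin n) (Fin n) F) := by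
    ext i j
    rcases eq_or_ne i j with rfl | hij
    · rcases eq_or_ne i 0 with rfl | hi
      · simp [hα]
      · simp [Matrix.one_apply, hα, diag i 0 hi]
    · simp [Matrix.one_apply, hij, offdiag i j hij]
  refine ⟨α, fun X => ?_⟩
  rw [key X, hCscalar]
  have hXs : X * (α • (1 : Matrix (Fin n) (Fin n) F)) + (α • 1) * X = (2 * α) • X := by
    rw [Matrix.mul_smul, Matrix.smul_mul, mul_one, one_mul, ← add_smul, two_mul, add_smul]
  rw [hXs, smul_smul]
  congr 1
  field_simp
end

section
/- Let F be a field of characteristic different from 2, and let V = V₀ ⊕ V₁ be a Z₂-graded F-vector space with V₀ ≠ 0 and V₁ ≠ 0, equipped with a bilinear form f : V × V → F such that f restricted to V₀ is symmetric and non-degenerate, f restricted to V₁ is alternating (skew-symmetric) and non-degenerate, and f(V₀, V₁) = f(V₁, V₀) = 0. Let J(V,f) be the superalgebra on F ⊕ V with multiplication (α + v)·(β + w) = (αβ + f(v,w)) + (αw + βv). Then every 1/2-derivation φ of J(V,f) is of the form φ(x) = α·x for some α ∈ F. -/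
/-- **1/2-derivations of the Jordan superalgebra of a superform.**
Let `F` be a field of characteristic not `2` and `V = V₀ ⊕ V₁` a
`ℤ/2`-graded vector space with `V₀ ≠ 0 ≠ V₁`, equipped with a bilinear
form `f` which is symmetric and non-degenerate on `V₀`, alternating
(skew-symmetric) and non-degenerate on `V₁`, and with
`f(V₀,V₁) = f(V₁,V₀) = 0`.  Then every `1/2`-derivation `φ` of the
superalgebra `J(V,f) = F ⊕ V` is of the form `φ x = α • x`
for some `α ∈ F`. -/
theorem half_derivation_of_jordan_superalgebra_of_superform
    {F V : Type*} [Field F] [AddCommGroup V] [Module F V]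
    (hchar : (2 : F) ≠ 0)
    (V0 V1 : Submodule F V)
    (hsup : V0 ⊔ V1 = ⊤) (hinf : V0 ⊓ V1 = ⊥)
    (hV0ne : V0 ≠ ⊥) (hV1ne : V1 ≠ ⊥)
    (f : V →ₗ[F] V →ₗ[F] F)
    (hsymm : ∀ v ∈ V0, ∀ w ∈ V0, f v w = f w v)
    (hnd0 : ∀ v ∈ V0, (∀ w ∈ V0, f v w = 0) → v = 0)
    (halt : ∀ v ∈ V1, f v v = 0)
    (hskew : ∀ v ∈ V1, ∀ w ∈ V1, f v w = - f w v)
    (hnd1 : ∀ v ∈ V1, (∀ w ∈ V1, f v w = 0) → v = 0)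
    (h01 : ∀ v ∈ V0, ∀ w ∈ V1, f v w = 0)
    (h10 : ∀ v ∈ V1, ∀ w ∈ V0, f v w = 0)
    (φ : (F × V) →ₗ[F] (F × V))
    (hφ : ∀ x y : F × V,
      φ (jordanFormMul f x y)
        = (1 / 2 : F) • (jordanFormMul f (φ x) y + jordanFormMul f x (φ y))) :
    ∃ α : F, ∀ x : F × V, φ x = α • x := by
  have hhalf : (1 / 2 : F) ≠ 0 := by
    simpa using one_div_ne_zero hchar
  set c : F × V := φ (1, 0) with hc
  have hid : ∀ y : F × V, jordanFormMul f (1, 0) y = y := by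
    intro y; simp [jordanFormMul]
  -- φ is multiplication by c
  have hmul : ∀ y : F × V, φ y = jordanFormMul f c y := by
    intro y
    have h := hφ (1, 0) y
    rw [hid, hid, ← hc] at h
    have h2 : (2 : F) • φ y = jordanFormMul f c y + φ y := by
      have := congrArg (fun z => (2 : F) • z) h
      simpa [smul_smul, mul_one_div, div_self hchar, mul_inv_cancel₀ hchar] using this
    have h3 : φ y + φ y = jordanFormMul f c y + φ y := by
      rw [← two_smul F (φ y)]; exact h2
    exact add_right_cancel h3
  -- key identity
  have key : ∀ v w : V, (f v w) • c.2
      = (1 / 2 : F) • ((f c.2 v) • w + (f c.2 w) • v) := by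
    intro v w
    have h := hφ (0, v) (0, w)
    rw [hmul (0, v), hmul (0, w), hmul (jordanFormMul f (0, v) (0, w))] at h
    have h2 := congrArg Prod.snd h
    simpa [jordanFormMul, smul_add] using h2
  -- f c.2 vanishes on V0 and V1
  obtain ⟨v0, hv0, hv0ne⟩ := Submodule.ne_bot_iff V0 |>.mp hV0ne
  obtain ⟨w1, hw1, hw1ne⟩ := Submodule.ne_bot_iff V1 |>.mp hV1ne
  have disj : ∀ a b : F, ∀ v ∈ V0, ∀ w ∈ V1, w ≠ 0 →
      v ≠ 0 → a • w + b • v = 0 → a = 0 ∧ b = 0 := by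
    intro a b v hv w hw hwne hvne hab
    have hmem : a • w ∈ V0 ⊓ V1 := by
      constructor
      · have : a • w = -(b • v) := by linear_combination (norm := module) hab
        rw [this]
        exact Submodule.neg_mem _ (Submodule.smul_mem _ _ hv)
      · exact Submodule.smul_mem _ _ hw
    rw [hinf, Submodule.mem_bot] at hmem
    have ha : a = 0 := by
      rcases smul_eq_zero.mp hmem with h | h
      · exact h
      · exact absurd h hwne
    refine ⟨ha, ?_⟩
    rw [ha] at hab
    simp only [zero_smul, zero_add] at hab
    rcases smul_eq_zero.mp hab with h | h
    · exact h
    · exact absurd h hvne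
  have hf0 : ∀ v ∈ V0, f c.2 v = 0 := by
    intro v hv
    have hk := key v w1
    rw [h01 v hv w1 hw1] at hk
    have : ((1/2 : F) * f c.2 v) • w1 + ((1/2 : F) * f c.2 w1) • v = 0 := by
      have := hk.symm
      rw [smul_add, smul_smul, smul_smul] at this
      simpa using this
    by_cases hvz : v = 0
    · simp [hvz]
    · have := (disj _ _ v hv w1 hw1 hw1ne hvz this).1
      rcases mul_eq_zero.mp this with h | h
      · exact absurd h hhalf
      · exact h
  have hf1 : ∀ w ∈ V1, f c.2 w = 0 := by
    intro w hw
    have hk := key w v0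
    rw [h10 w hw v0 hv0] at hk
    have : ((1/2 : F) * f c.2 v0) • w + ((1/2 : F) * f c.2 w) • v0 = 0 := by
      have := hk.symm
      rw [smul_add, smul_smul, smul_smul] at this
      have h2 : ((1/2 : F) * f c.2 w) • v0 + ((1/2 : F) * f c.2 v0) • w = 0 := by
        simpa using this
      linear_combination (norm := module) h2
    -- Here roles: a • w + b • v0 with v0 ∈ V0, w ∈ V1... need w ≠ 0 case
    by_cases hwz : w = 0
    · simp [hwz]
    · have := (disj _ _ v0 hv0 w hw hwz hv0ne this).2
      rcases mul_eq_zero.mp this with h | h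
      · exact absurd h hhalf
      · exact h
  -- decompose c.2 and conclude c.2 = 0
  have hc2 : c.2 = 0 := by
    have hmem : c.2 ∈ V0 ⊔ V1 := by rw [hsup]; trivial
    obtain ⟨u0, hu0, u1, hu1, hsum⟩ := Submodule.mem_sup.mp hmem
    have hu0z : u0 = 0 := by
      apply hnd0 u0 hu0
      intro w hw
      have := hf0 w hw
      rw [← hsum] at this
      rw [map_add] at this
      simp only [LinearMap.add_apply] at this
      rw [h10 u1 hu1 w hw] at this
      simpa using this
    have hu1z : u1 = 0 := by
      apply hnd1 u1 hu1
      intro w hw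
      have := hf1 w hw
      rw [← hsum] at this
      rw [map_add] at this
      simp only [LinearMap.add_apply] at this
      rw [h01 u0 hu0 w hw] at this
      simpa using this
    rw [← hsum, hu0z, hu1z, add_zero]
  refine ⟨c.1, fun x => ?_⟩
  rw [hmul x]
  simp [jordanFormMul, hc2, Prod.smul_def]
end

section
/- Let F be a field of characteristic 0 and n ≥ 2. Let Γ_n be the Grassmann (exterior) algebra over F on anticommuting generators e₁, …, e_n (eᵢ² = 0, eᵢe_j = −e_je_i), with parity grading Γ_n = (Γ_n)₀ ⊕ (Γ_n)₁ by even/odd word length, and write p(a) for the parity of a homogeneous element a. For each j let ∂/∂e_j be the linear map with ∂/∂e_j(e_{i₁}⋯e_{i_k}) = (−1)^{l−1} e_{i₁}⋯e_{i_{l−1}}e_{i_{l+1}}⋯e_{i_k} if j = i_l (for i₁ < ⋯ < i_k), and 0 if j does not occur. For parity-homogeneous f, g set {f,g} = (−1)^{p(f)} Σ_{j=1}^{n} (∂f/∂e_j)(∂g/∂e_j). Let J(Γ_n) = Γ_n ⊕ Γ̄_n, where Γ̄_n is an isomorphic copy of Γ_n via a ↦ ā, with the bilinear product • determined on parity-homogeneous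 a, b ∈ Γ_n by: a • b = ab, a • b̄ = (ab)‾, ā • b = (−1)^{p(b)} (ab)‾, and ā • b̄ = (−1)^{p(b)} {a,b}. Then every 1/2-derivation φ of J(Γ_n) is of the form φ(x) = α·x for some α ∈ F. -/
set_option maxHeartbeats 2000000 in
/-- **1/2-derivations of the Jordan superalgebra `J(Γₙ)` of a Grassmann
algebra.**
Let `F` be a field of characteristic `0` and `n ≥ 2`.  The Grassmann
algebra `Γₙ` on `n` anticommuting generators is the exterior algebra of
`Fⁿ`; its generators are `eⱼ = ι (Pi.single j 1)`, its `ℤ/2`-parity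
grading is `CliffordAlgebra.evenOdd 0`, and the partial derivatives
`∂/∂eⱼ` are the unique linear maps `D j` with `D j 1 = 0` and
`D j (ι m * x) = m j • x − ι m * D j x`.  The superalgebra
`J(Γₙ) = Γₙ ⊕ Γ̄ₙ` is realized as `Γₙ × Γₙ` (second factor the copy
`Γ̄ₙ`), with the bilinear product `mul` determined on parity-homogeneous
elements by `a • b = ab`, `a • b̄ = (ab)‾`, `ā • b = (−1)^{p(b)}(ab)‾` and
`ā • b̄ = (−1)^{p(a)+p(b)} Σⱼ (∂a/∂eⱼ)(∂b/∂eⱼ)`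
(that is, `ā • b̄ = (−1)^{p(b)} {a,b}` with
`{a,b} = (−1)^{p(a)} Σⱼ (∂a/∂eⱼ)(∂b/∂eⱼ)`).
Then every `1/2`-derivation `φ` of `J(Γₙ)` is of the form `φ x = α • x`
for some `α ∈ F`. -/
theorem half_derivation_of_grassmann_jordan_superalgebra
    {F : Type*} [Field F] [CharZero F] (n : ℕ) (hn : 2 ≤ n)
    (D : Fin n → (ExteriorAlgebra F (Fin n → F) →ₗ[F] ExteriorAlgebra F (Fin n → F)))
    (hDone : ∀ j, D j 1 = 0)
    (hDmul : ∀ (j : Fin n) (m : Fin n → F) (x : ExteriorAlgebra F (Fin n → F)),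
      D j (ExteriorAlgebra.ι F m * x) = m j • x - ExteriorAlgebra.ι F m * D j x)
    (mul : (ExteriorAlgebra F (Fin n → F) × ExteriorAlgebra F (Fin n → F)) →ₗ[F]
      (ExteriorAlgebra F (Fin n → F) × ExteriorAlgebra F (Fin n → F)) →ₗ[F]
      (ExteriorAlgebra F (Fin n → F) × ExteriorAlgebra F (Fin n → F)))
    (hmul₁ : ∀ a b : ExteriorAlgebra F (Fin n → F), mul (a, 0) (b, 0) = (a * b, 0))
    (hmul₂ : ∀ a b : ExteriorAlgebra F (Fin n → F), mul (a, 0) (0, b) = (0, a * b))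
    (hmul₃ : ∀ (i : ZMod 2) (b : ExteriorAlgebra F (Fin n → F)),
      b ∈ CliffordAlgebra.evenOdd (0 : QuadraticForm F (Fin n → F)) i →
      ∀ x : ExteriorAlgebra F (Fin n → F),
        mul (0, x) (b, 0) = (0, ((-1 : F) ^ i.val) • (x * b)))
    (hmul₄ : ∀ (i j : ZMod 2) (x y : ExteriorAlgebra F (Fin n → F)),
      x ∈ CliffordAlgebra.evenOdd (0 : QuadraticForm F (Fin n → F)) i →
      y ∈ CliffordAlgebra.evenOdd (0 : QuadraticForm F (Fin n → F)) j →
      mul (0, x) (0, y)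
        = (((-1 : F) ^ (i.val + j.val)) • ∑ k : Fin n, D k x * D k y, 0))
    (φ : (ExteriorAlgebra F (Fin n → F) × ExteriorAlgebra F (Fin n → F)) →ₗ[F]
      (ExteriorAlgebra F (Fin n → F) × ExteriorAlgebra F (Fin n → F)))
    (hφ : ∀ x y : ExteriorAlgebra F (Fin n → F) × ExteriorAlgebra F (Fin n → F),
      φ (mul x y) = (1 / 2 : F) • (mul (φ x) y + mul x (φ y))) :
    ∃ α : F, ∀ x : ExteriorAlgebra F (Fin n → F) × ExteriorAlgebra F (Fin n → F),
      φ x = α • x := by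
  classical
  set E : Fin n → ExteriorAlgebra F (Fin n → F) := fun j => ExteriorAlgebra.ι F (Pi.single j 1)
    with hE
  -- basic facts about D
  have hDalg : ∀ (j : Fin n) (r : F), D j (algebraMap F (ExteriorAlgebra F (Fin n → F)) r) = 0 := by
    intro j r
    rw [Algebra.algebraMap_eq_smul_one, map_smul, hDone, smul_zero]
  have hDι : ∀ (j : Fin n) (m : Fin n → F),
      D j (ExteriorAlgebra.ι F m) = m j • (1 : ExteriorAlgebra F (Fin n → F)) := by
    intro j m
    have := hDmul j m 1
    simpa [hDone] using this
  have hDE : ∀ k j : Fin n, D k (E j) = ((Pi.single j 1 : Fin n → F) k) • (1 : ExteriorAlgebra F (Fin n → F)) := by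
    intro k j
    simp only [hE]
    exact hDι k _
  have hsumE : ∀ (b : ExteriorAlgebra F (Fin n → F)) (j : Fin n),
      ∑ k : Fin n, D k b * D k (E j) = D j b := by
    intro b j
    have : ∀ k : Fin n, D k b * D k (E j) = if k = j then D k b else 0 := by
      intro k
      rw [hDE, Pi.single_apply]
      split <;> simp
    simp only [this]
    simp
  have hsumE' : ∀ (b : ExteriorAlgebra F (Fin n → F)) (j : Fin n),
      ∑ k : Fin n, D k (E j) * D k b = D j b := by
    intro b j
    have : ∀ k : Fin n, D k (E j) * D k b = if k = j then D k b else 0 := by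
      intro k
      rw [hDE, Pi.single_apply]
      split <;> simp
    simp only [this]
    simp
  -- homogeneity facts
  have h1mem : (1 : ExteriorAlgebra F (Fin n → F)) ∈ (CliffordAlgebra.evenOdd (0 : QuadraticForm F (Fin n → F))) 0 := SetLike.GradedOne.one_mem
  have hEmem : ∀ j, E j ∈ (CliffordAlgebra.evenOdd (0 : QuadraticForm F (Fin n → F))) 1 := fun j => CliffordAlgebra.ι_mem_evenOdd_one _ _
  have hdmem : ∀ (x : ExteriorAlgebra F (Fin n → F)) (i : ZMod 2),
      ((DirectSum.decompose (CliffordAlgebra.evenOdd (0 : QuadraticForm F (Fin n → F))) x i : (CliffordAlgebra.evenOdd (0 : QuadraticForm F (Fin n → F))) i) : ExteriorAlgebra F (Fin n → F)) ∈ (CliffordAlgebra.evenOdd (0 : QuadraticForm F (Fin n → F))) i :=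
    fun x i => SetLike.coe_mem _
  have hsplit : ∀ x : ExteriorAlgebra F (Fin n → F),
      x = (DirectSum.decompose (CliffordAlgebra.evenOdd (0 : QuadraticForm F (Fin n → F))) x 0 : ExteriorAlgebra F (Fin n → F))
        + (DirectSum.decompose (CliffordAlgebra.evenOdd (0 : QuadraticForm F (Fin n → F))) x 1 : ExteriorAlgebra F (Fin n → F)) := by
    intro x
    conv_lhs => rw [← DirectSum.sum_support_decompose (CliffordAlgebra.evenOdd (0 : QuadraticForm F (Fin n → F))) x]
    rw [Finset.sum_subset (Finset.subset_univ _) (fun i _ hi => by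
      rw [DFinsupp.notMem_support_iff.mp hi, ZeroMemClass.coe_zero])]
    rw [show (Finset.univ : Finset (ZMod 2)) = {0,1} from by decide, Finset.sum_insert (by decide),
      Finset.sum_singleton]
  -- unit laws
  have hlu : ∀ x : ExteriorAlgebra F (Fin n → F) × ExteriorAlgebra F (Fin n → F),
      mul (1, 0) x = x := by
    intro x
    have hx : x = ((x.1, 0) : _ × _) + (0, x.2) := by simp
    rw [hx, map_add, hmul₁, hmul₂, one_mul, one_mul]
  have hru : ∀ x : ExteriorAlgebra F (Fin n → F) × ExteriorAlgebra F (Fin n → F),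
      mul x (1, 0) = x := by
    intro x
    have hx : x = ((x.1, 0) : _ × _) + (0, x.2) := by simp
    rw [hx, map_add, LinearMap.add_apply, hmul₁, hmul₃ 0 1 h1mem x.2, mul_one, mul_one]
    simp
  set c := φ (1, 0) with hcdef
  have hφl : ∀ x, φ x = mul c x := by
    intro x
    have h := hφ (1, 0) x
    rw [hlu, hlu, ← hcdef] at h
    have h2 := congrArg (fun z => (2:F) • z) h
    simp only [smul_smul] at h2
    norm_num at h2
    rw [two_smul] at h2
    exact (add_right_cancel h2)
  have hφr : ∀ x, φ x = mul x c := by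
    intro x
    have h := hφ x (1, 0)
    rw [hru, hru, ← hcdef] at h
    have h2 := congrArg (fun z => (2:F) • z) h
    simp only [smul_smul] at h2
    norm_num at h2
    rw [two_smul, add_comm] at h2
    exact (add_left_cancel h2)
  -- decompose the components of c
  set a := c.1 with hadef
  set b := c.2 with hbdef
  have hcab : c = (a, b) := rfl
  set a0 := (DirectSum.decompose (CliffordAlgebra.evenOdd (0 : QuadraticForm F (Fin n → F))) a 0 : ExteriorAlgebra F (Fin n → F)) with ha0
  set a1 := (DirectSum.decompose (CliffordAlgebra.evenOdd (0 : QuadraticForm F (Fin n → F))) a 1 : ExteriorAlgebra F (Fin n → F)) with ha1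
  set b0 := (DirectSum.decompose (CliffordAlgebra.evenOdd (0 : QuadraticForm F (Fin n → F))) b 0 : ExteriorAlgebra F (Fin n → F)) with hb0
  set b1 := (DirectSum.decompose (CliffordAlgebra.evenOdd (0 : QuadraticForm F (Fin n → F))) b 1 : ExteriorAlgebra F (Fin n → F)) with hb1
  have ha : a = a0 + a1 := hsplit a
  have hb : b = b0 + b1 := hsplit b
  have ha0m : a0 ∈ (CliffordAlgebra.evenOdd (0 : QuadraticForm F (Fin n → F))) 0 := hdmem a 0
  have ha1m : a1 ∈ (CliffordAlgebra.evenOdd (0 : QuadraticForm F (Fin n → F))) 1 := hdmem a 1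
  have hb0m : b0 ∈ (CliffordAlgebra.evenOdd (0 : QuadraticForm F (Fin n → F))) 0 := hdmem b 0
  have hb1m : b1 ∈ (CliffordAlgebra.evenOdd (0 : QuadraticForm F (Fin n → F))) 1 := hdmem b 1
  have hcsum : c = ((a, 0) : _ × _) + (0, b0) + (0, b1) := by
    rw [hcab, hb]; simp
  -- φ (0,1) computed two ways
  have hP : φ (0, (1:ExteriorAlgebra F (Fin n → F))) = (0, a) := by
    rw [hφl, hcsum, map_add, map_add, LinearMap.add_apply, LinearMap.add_apply,
      hmul₂, hmul₄ 0 0 b0 1 hb0m h1mem, hmul₄ 1 0 b1 1 hb1m h1mem]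
    simp [hDone]
  have hQ : φ (0, (1:ExteriorAlgebra F (Fin n → F))) = (0, a0 - a1) := by
    have hcsum' : c = ((a0, 0) : _ × _) + (a1, 0) + ((0, b0) + (0, b1)) := by
      rw [hcab, ha, hb]; simp
    rw [hφr, hcsum', map_add, map_add, map_add,
      hmul₃ 0 a0 ha0m 1, hmul₃ 1 a1 ha1m 1,
      hmul₄ 0 0 1 b0 h1mem hb0m, hmul₄ 0 1 1 b1 h1mem hb1m]
    simp [hDone, show ZMod.val (1 : ZMod 2) = 1 from rfl, sub_eq_add_neg]
  have ha1z : a1 = 0 := by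
    have h := hP.symm.trans hQ
    have h2 : a0 + a1 = a0 - a1 := by
      have := congrArg Prod.snd h
      simpa [ha] using this
    rw [sub_eq_add_neg] at h2
    have h3 : a1 + a1 = 0 := add_eq_zero_iff_eq_neg.mpr (add_left_cancel h2)
    have h4 : (2:F) • a1 = 0 := by rw [two_smul]; exact h3
    have := smul_eq_zero.mp h4
    rcases this with h | h
    · exact absurd h (by norm_num)
    · exact h
  have haa : a = a0 := by rw [ha, ha1z, add_zero]
  have ham : a ∈ (CliffordAlgebra.evenOdd (0 : QuadraticForm F (Fin n → F))) 0 := haa ▸ ha0m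
  have hcap : ∀ z : ExteriorAlgebra F (Fin n → F), z ∈ (CliffordAlgebra.evenOdd (0 : QuadraticForm F (Fin n → F))) 0 → z ∈ (CliffordAlgebra.evenOdd (0 : QuadraticForm F (Fin n → F))) 1 → z = 0 := by
    intro z h0 h1'
    have e1 := DirectSum.decompose_of_mem_same (CliffordAlgebra.evenOdd (0 : QuadraticForm F (Fin n → F))) h0
    have e2 := DirectSum.decompose_of_mem_ne (CliffordAlgebra.evenOdd (0 : QuadraticForm F (Fin n → F))) h1' (by decide : (1:ZMod 2) ≠ 0)
    rw [← e1, e2]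
  have haEm : ∀ j, a * E j ∈ (CliffordAlgebra.evenOdd (0 : QuadraticForm F (Fin n → F))) 1 := by
    intro j
    simpa using SetLike.mul_mem_graded ham (hEmem j)
  have hhalf : (1/2 : F) ≠ 0 := by norm_num
  -- the value of φ on (0, E j)
  have hφEj : ∀ j, φ (0, E j) = (D j b1 - D j b0, a * (E j)) := by
    intro j
    rw [hφl, hcsum, map_add, map_add, LinearMap.add_apply, LinearMap.add_apply,
      hmul₂, hmul₄ 0 1 b0 (E j) hb0m (hEmem j), hmul₄ 1 1 b1 (E j) hb1m (hEmem j),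
      hsumE b0 j, hsumE b1 j]
    simp only [show (ZMod.val (0:ZMod 2) + ZMod.val (1:ZMod 2)) = 1 from rfl,
      show (ZMod.val (1:ZMod 2) + ZMod.val (1:ZMod 2)) = 2 from rfl,
      pow_one, neg_one_sq, neg_smul, one_smul, Prod.mk_add_mk, add_zero, zero_add,
      Prod.mk.injEq]
    exact ⟨by abel, trivial⟩
  -- step 3 : D j a = 0 and D j b1 - D j b0 = 0
  have hstep3 : ∀ j : Fin n, D j a = 0 ∧ D j b1 - D j b0 = 0 := by
    intro j
    have h01Ej : mul ((0 : ExteriorAlgebra F (Fin n → F)), (1 : ExteriorAlgebra F (Fin n → F)))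
        (0, E j) = 0 := by
      rw [hmul₄ 0 1 1 (E j) h1mem (hEmem j)]
      simp [hDone]
    have hmain := hφ (0, (1 : ExteriorAlgebra F (Fin n → F))) (0, E j)
    rw [h01Ej, map_zero, hP, hφEj j] at hmain
    set w := D j b1 - D j b0 with hw
    set w0 := (DirectSum.decompose (CliffordAlgebra.evenOdd (0 : QuadraticForm F (Fin n → F))) w 0 : ExteriorAlgebra F (Fin n → F)) with hw0
    set w1 := (DirectSum.decompose (CliffordAlgebra.evenOdd (0 : QuadraticForm F (Fin n → F))) w 1 : ExteriorAlgebra F (Fin n → F)) with hw1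
    have hwsplit : (w, a * E j) = ((w0, 0) : _ × _) + (w1, 0) + (0, a * E j) := by
      have := hsplit w
      simp [Prod.ext_iff]
      exact this
    rw [hwsplit, map_add, map_add,
      hmul₃ 0 w0 (hdmem w 0) 1, hmul₃ 1 w1 (hdmem w 1) 1,
      hmul₄ 0 1 1 (a * E j) h1mem (haEm j),
      hmul₄ 0 1 a (E j) ham (hEmem j), hsumE a j] at hmain
    have hm1 := congrArg Prod.fst hmain
    have hm2 := congrArg Prod.snd hmain
    simp only [show (ZMod.val (0:ZMod 2) + ZMod.val (1:ZMod 2)) = 1 from rfl,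
      show ZMod.val (0:ZMod 2) = 0 from rfl,
      hDone, zero_mul, Finset.sum_const_zero, smul_zero, pow_one, pow_zero, one_smul,
      one_mul, neg_smul, Prod.mk_add_mk, add_zero, zero_add, Prod.smul_mk,
      Prod.fst_zero, Prod.snd_zero, neg_zero] at hm1 hm2
    constructor
    · -- first components : 0 = (1/2) • (-(D j a))
      rcases smul_eq_zero.mp hm1.symm with h | h
      · exact absurd h hhalf
      · rcases smul_eq_zero.mp h with h' | h'
        · exact absurd h' (pow_ne_zero _ (by norm_num))
        · exact h'
    · -- second : w0 = w1 hence w = 0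
      have hww : w0 = w1 := by
        rcases smul_eq_zero.mp hm2.symm with h | h
        · exact absurd h hhalf
        · rw [show ZMod.val (1:ZMod 2) = 1 from rfl, pow_one, neg_one_smul,
            add_neg_eq_zero] at h
          exact h
      have hz0 : w0 = 0 := hcap w0 (hdmem w 0) (hww ▸ hdmem w 1)
      have hz1 : w1 = 0 := by rw [← hww, hz0]
      rw [hw]  -- ?
      have := hsplit w
      rw [← hw0, ← hw1, hz0, hz1, add_zero] at this
      simpa [hw] using this
  have hDa : ∀ j, D j a = 0 := fun j => (hstep3 j).1
  have hwzero : ∀ j, D j b1 - D j b0 = 0 := fun j => (hstep3 j).2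
  -- step 4 : b = 0
  have hbz : b = 0 := by
    have j0 : Fin n := ⟨0, by omega⟩
    have hmulEE : mul ((0 : ExteriorAlgebra F (Fin n → F)), E j0) (0, E j0)
        = ((1 : ExteriorAlgebra F (Fin n → F)), 0) := by
      rw [hmul₄ 1 1 (E j0) (E j0) (hEmem j0) (hEmem j0), hsumE' (E j0) j0, hDE j0 j0]
      simp [show ZMod.val (1:ZMod 2) = 1 from rfl]
    have hφE0 : φ (0, E j0) = (0, a * E j0) := by
      rw [hφEj j0, hwzero j0]
    have hmain := hφ (0, E j0) (0, E j0)
    rw [hmulEE, hφE0, ← hcdef, hcab,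
      hmul₄ 1 1 (a * E j0) (E j0) (haEm j0) (hEmem j0),
      hmul₄ 1 1 (E j0) (a * E j0) (hEmem j0) (haEm j0)] at hmain
    have := congrArg Prod.snd hmain
    simpa using this
  -- step 5 : elements killed by all D j are scalars (number operator argument)
  have hsum_ι : ∀ v : Fin n → F, ∑ j : Fin n, v j • E j = ExteriorAlgebra.ι F v := by
    intro v
    simp only [hE]
    have h1 : ∀ j : Fin n, v j • ExteriorAlgebra.ι F ((Pi.single j 1 : Fin n → F))
        = ExteriorAlgebra.ι F ((Pi.single j (v j) : Fin n → F)) := by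
      intro j
      have h2 : (Pi.single j (v j) : Fin n → F) = v j • (Pi.single j 1 : Fin n → F) := by
        have := Pi.single_smul' (I := Fin n) j (v j) (1:F)
        rw [smul_eq_mul, mul_one] at this
        exact this
      rw [← map_smul, ← h2]
    rw [Finset.sum_congr rfl (fun j _ => h1 j), ← map_sum]
    congr 1
    exact Finset.univ_sum_single v
  have hT : ∀ (k : ℕ) (x : ExteriorAlgebra F (Fin n → F)), x ∈ ⋀[F]^k (Fin n → F) →
      ∑ j : Fin n, E j * D j x = (k : F) • x := by
    intro k x hx
    induction hx using Submodule.pow_induction_on_left' with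
    | algebraMap r => simp [hDalg]
    | add x y i hx hy ihx ihy =>
      simp only [map_add, mul_add, Finset.sum_add_distrib, ihx, ihy, smul_add]
    | mem_mul m hm i x hx ih =>
      obtain ⟨v, rfl⟩ := hm
      have h3 : ∀ j : Fin n, E j * ExteriorAlgebra.ι F v
          = -(ExteriorAlgebra.ι F v * E j) := by
        intro j
        simp only [hE]
        exact eq_neg_of_add_eq_zero_left (ExteriorAlgebra.ι_add_mul_swap _ _)
      have h1 : ∀ j : Fin n, E j * D j (ExteriorAlgebra.ι F v * x)
          = v j • (E j * x) + ExteriorAlgebra.ι F v * (E j * D j x) := by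
        intro j
        rw [hDmul, mul_sub, mul_smul_comm, ← mul_assoc, h3, neg_mul, mul_assoc,
          sub_neg_eq_add]
      calc ∑ j : Fin n, E j * D j (ExteriorAlgebra.ι F v * x)
          = (∑ j : Fin n, v j • E j) * x
            + ExteriorAlgebra.ι F v * ∑ j : Fin n, E j * D j x := by
            rw [Finset.sum_congr rfl (fun j _ => h1 j), Finset.sum_add_distrib,
              Finset.sum_mul, Finset.mul_sum]
            simp only [smul_mul_assoc]
        _ = ExteriorAlgebra.ι F v * x + (i:F) • (ExteriorAlgebra.ι F v * x) := by
            rw [hsum_ι, ih, mul_smul_comm]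
        _ = ((i + 1 : ℕ) : F) • (ExteriorAlgebra.ι F v * x) := by
            push_cast
            rw [add_smul, one_smul, add_comm]
  have hkz : ∀ k : ℕ, k ≠ 0 →
      (DirectSum.decompose (fun k : ℕ => ⋀[F]^k (Fin n → F)) a k
        : ExteriorAlgebra F (Fin n → F)) = 0 := by
    intro k0 hk0
    by_cases hks : k0 ∈ (DirectSum.decompose (fun k : ℕ => ⋀[F]^k (Fin n → F)) a).support
    swap
    · rw [DFinsupp.notMem_support_iff.mp hks, ZeroMemClass.coe_zero]
    · set s := (DirectSum.decompose (fun k : ℕ => ⋀[F]^k (Fin n → F)) a).support with hs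
      have hdec : a = ∑ k ∈ s, (DirectSum.decompose (fun k : ℕ => ⋀[F]^k (Fin n → F)) a k
          : ExteriorAlgebra F (Fin n → F)) :=
        (DirectSum.sum_support_decompose _ a).symm
      have h0 : ∑ k ∈ s, (k : F) •
          (DirectSum.decompose (fun k : ℕ => ⋀[F]^k (Fin n → F)) a k
            : ExteriorAlgebra F (Fin n → F)) = 0 := by
        have e1 : ∀ k ∈ s, (k : F) •
            (DirectSum.decompose (fun k : ℕ => ⋀[F]^k (Fin n → F)) a k
              : ExteriorAlgebra F (Fin n → F))
            = ∑ j : Fin n, E j * D j (DirectSum.decompose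
                (fun k : ℕ => ⋀[F]^k (Fin n → F)) a k
                : ExteriorAlgebra F (Fin n → F)) := by
          intro k _
          exact (hT k _ (SetLike.coe_mem _)).symm
        rw [Finset.sum_congr rfl e1, Finset.sum_comm]
        have e2 : ∀ j : Fin n, ∑ k ∈ s, E j * D j (DirectSum.decompose
            (fun k : ℕ => ⋀[F]^k (Fin n → F)) a k : ExteriorAlgebra F (Fin n → F))
            = E j * D j a := by
          intro j
          rw [← Finset.mul_sum, ← map_sum, ← hdec]
        rw [Finset.sum_congr rfl (fun j _ => e2 j)]
        simp [hDa]
      have h1 := congrArg (fun z => ((DirectSum.decompose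
          (fun k : ℕ => ⋀[F]^k (Fin n → F)) z k0 : ⋀[F]^k0 (Fin n → F))
            : ExteriorAlgebra F (Fin n → F))) h0
      simp only [DirectSum.decompose_sum, DirectSum.decompose_zero,
        DirectSum.zero_apply, ZeroMemClass.coe_zero] at h1
      rw [DFinsupp.finset_sum_apply] at h1
      rw [AddSubmonoidClass.coe_finset_sum] at h1
      have h2 : ∀ k ∈ s, k ≠ k0 → ((DirectSum.decompose (fun k : ℕ => ⋀[F]^k (Fin n → F))
          ((k : F) • (DirectSum.decompose (fun k : ℕ => ⋀[F]^k (Fin n → F)) a k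
            : ExteriorAlgebra F (Fin n → F))) k0 : ⋀[F]^k0 (Fin n → F))
              : ExteriorAlgebra F (Fin n → F)) = 0 := by
        intro k _ hkk
        rw [DirectSum.decompose_of_mem_ne (fun k : ℕ => ⋀[F]^k (Fin n → F))
          (Submodule.smul_mem _ _ (SetLike.coe_mem _)) hkk]
      rw [Finset.sum_eq_single_of_mem k0 hks h2] at h1
      rw [DirectSum.decompose_of_mem_same (fun k : ℕ => ⋀[F]^k (Fin n → F))
          (Submodule.smul_mem _ _ (SetLike.coe_mem _))] at h1
      rcases smul_eq_zero.mp h1 with h | h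
      · exact absurd (Nat.cast_eq_zero.mp h) hk0
      · exact h
  -- hence a is a scalar
  obtain ⟨α, hα⟩ : ∃ α : F, algebraMap F (ExteriorAlgebra F (Fin n → F)) α = a := by
    have hdec := (DirectSum.sum_support_decompose
      (fun k : ℕ => ⋀[F]^k (Fin n → F)) a).symm
    rw [Finset.sum_eq_single 0 (fun k _ hk => hkz k hk)
      (fun h0 => by rw [DFinsupp.notMem_support_iff.mp h0, ZeroMemClass.coe_zero])] at hdec
    have hmem : a ∈ ⋀[F]^0 (Fin n → F) := hdec ▸ SetLike.coe_mem _
    have hmem' : a ∈ (LinearMap.range (ExteriorAlgebra.ι F :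
        (Fin n → F) →ₗ[F] ExteriorAlgebra F (Fin n → F)))^(0:ℕ) := hmem
    rw [pow_zero] at hmem'
    exact Submodule.mem_one.mp hmem'
  -- conclusion
  refine ⟨α, fun x => ?_⟩
  have hcval : c = α • ((1 : ExteriorAlgebra F (Fin n → F)), (0 : ExteriorAlgebra F (Fin n → F))) := by
    rw [hcab, hbz, ← hα, Algebra.algebraMap_eq_smul_one]
    simp
  rw [hφr x, hcval, map_smul, hru]
end
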